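/- Let I be a consistent Nelson interpretation and φ any extended formula. Then I,w ⊨ φ if and only if I,w ⊩⁺ φ, where I,w ⊨ φ is defined as I,w ⊩⁺ (¬~φ ∧ φ) (cw-inference collapses to ordinary forcing on consistent interpretations). -/
import Mathlib


inductive Formula (Atom : Type) : Type
  | bot : Formula Atom
  | atom : Atom → Formula Atom
  | sneg : Formula Atom → Formula Atom
  | conj : Formula Atom → Formula Atom → Formula Atom
  | disj : Formula Atom → Formula Atom → Formula Atom
  | impl : Formula Atom → Formula Atom → Formula Atom
  | dneg : Formula Atom → Formula Atom

structure NelsonInterp (Atom : Type) where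
  W : Type
  le : W → W → Prop
  refl : ∀ w, le w w
  trans : ∀ {w₁ w₂ w₃}, le w₁ w₂ → le w₂ w₃ → le w₁ w₃
  Vp : W → Set Atom
  Vm : W → Set Atom
  monoP : ∀ {w w'}, le w w' → Vp w ⊆ Vp w'
  monoM : ∀ {w w'}, le w w' → Vm w ⊆ Vm w'

mutual
  def forceP {Atom : Type} (I : NelsonInterp Atom) (w : I.W) : Formula Atom → Prop
    | .bot => False
    | .atom a => a ∈ I.Vp w
    | .sneg φ => forceM I w φ
    | .conj φ ψ => forceP I w φ ∧ forceP I w ψ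
    | .disj φ ψ => forceP I w φ ∨ forceP I w ψ
    | .impl φ ψ => ∀ w', I.le w w' → (¬ forceP I w' φ ∨ forceP I w' ψ)
    | .dneg φ => (∀ w', I.le w w' → ¬ forceP I w' φ) ∨ (forceP I w φ ∧ forceM I w φ)
  def forceM {Atom : Type} (I : NelsonInterp Atom) (w : I.W) : Formula Atom → Prop
    | .bot => True
    | .atom a => a ∈ I.Vm w
    | .sneg φ => forceP I w φ
    | .conj φ ψ => forceM I w φ ∨ forceM I w ψ
    | .disj φ ψ => forceM I w φ ∧ forceM I w ψ
    | .impl φ ψ => forceP I w φ ∧ forceM I w ψ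
    | .dneg φ => forceP I w φ ∧ ¬ forceM I w φ
end

def Formula.neg {Atom : Type} (φ : Formula Atom) : Formula Atom := φ.impl .bot

def Formula.supImp {Atom : Type} (φ ψ : Formula Atom) : Formula Atom :=
  ((φ.sneg.neg).conj φ).impl ψ

def Formula.attack {Atom : Type} (φ ψ : Formula Atom) : Formula Atom :=
  φ.supImp ψ.sneg

/-- cw-inference at a world: `I,w ⊨ φ` iff `I,w ⊩⁺ ¬~φ ∧ φ`. -/
def cw {Atom : Type} (I : NelsonInterp Atom) (w : I.W) (φ : Formula Atom) : Prop :=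
  forceP I w ((φ.sneg.neg).conj φ)

/-- `I ⊩⁺ φ` : forcing at all worlds. -/
def forcedP {Atom : Type} (I : NelsonInterp Atom) (φ : Formula Atom) : Prop :=
  ∀ w, forceP I w φ

def forcedM {Atom : Type} (I : NelsonInterp Atom) (φ : Formula Atom) : Prop :=
  ∀ w, forceM I w φ

/-- `I ⊨ φ` : cw-inference at all worlds. -/
def cwAll {Atom : Type} (I : NelsonInterp Atom) (φ : Formula Atom) : Prop :=
  ∀ w, cw I w φ

def NelsonInterp.Consistent {Atom : Type} (I : NelsonInterp Atom) : Prop :=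
  ∀ w, I.Vp w ∩ I.Vm w = ∅

/-- An HT-interpretation: two worlds h ≤ t, given by four sets of atoms. -/
structure HTInterp (Atom : Type) where
  Hp : Set Atom
  Hm : Set Atom
  Tp : Set Atom
  Tm : Set Atom
  subP : Hp ⊆ Tp
  subM : Hm ⊆ Tm

/-- The underlying Nelson interpretation: world `false` is h, world `true` is t. -/
def HTInterp.toNelson {Atom : Type} (I : HTInterp Atom) : NelsonInterp Atom where
  W := Bool
  le := (· ≤ ·)
  refl := le_refl
  trans := le_trans
  Vp := fun w => if w then I.Tp else I.Hp
  Vm := fun w => if w then I.Tm else I.Hm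
  monoP := by
    intro w w' hle
    match w, w', hle with
    | false, false, _ => exact subset_rfl
    | false, true, _ => exact I.subP
    | true, true, _ => exact subset_rfl
    | true, false, h => exact absurd h (by decide)
  monoM := by
    intro w w' hle
    match w, w', hle with
    | false, false, _ => exact subset_rfl
    | false, true, _ => exact I.subM
    | true, true, _ => exact subset_rfl
    | true, false, h => exact absurd h (by decide)


lemma consistent_not_both {Atom : Type} (I : NelsonInterp Atom) (hI : I.Consistent)
    (φ : Formula Atom) : ∀ w, ¬ (forceP I w φ ∧ forceM I w φ) := by
  induction φ with
  | bot => intro w ⟨h, _⟩; exact h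
  | atom a => intro w ⟨hp, hm⟩
              have := hI w
              exact absurd (Set.mem_inter hp hm) (by simp [this])
  | sneg φ ih => intro w ⟨hp, hm⟩; exact ih w ⟨hm, hp⟩
  | conj φ ψ ihφ ihψ =>
      intro w ⟨⟨h1, h2⟩, hm⟩
      rcases hm with h | h
      · exact ihφ w ⟨h1, h⟩
      · exact ihψ w ⟨h2, h⟩
  | disj φ ψ ihφ ihψ =>
      intro w ⟨hp, ⟨m1, m2⟩⟩
      rcases hp with h | h
      · exact ihφ w ⟨h, m1⟩
      · exact ihψ w ⟨h, m2⟩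
  | impl φ ψ ihφ ihψ =>
      intro w ⟨hp, ⟨mφ, mψ⟩⟩
      rcases hp w (I.refl w) with h | h
      · exact h mφ
      · exact ihψ w ⟨h, mψ⟩
  | dneg φ ih =>
      intro w ⟨hp, ⟨pφ, nmφ⟩⟩
      rcases hp with h | h
      · exact h w (I.refl w) pφ
      · exact nmφ h.2

lemma force_mono {Atom : Type} (I : NelsonInterp Atom) (hI : I.Consistent)
    (φ : Formula Atom) : ∀ w w', I.le w w' →
    (forceP I w φ → forceP I w' φ) ∧ (forceM I w φ → forceM I w' φ) := by
  induction φ with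
  | bot => intro w w' _; exact ⟨id, id⟩
  | atom a => intro w w' hle; exact ⟨fun h => I.monoP hle h, fun h => I.monoM hle h⟩
  | sneg φ ih => intro w w' hle; exact ⟨(ih w w' hle).2, (ih w w' hle).1⟩
  | conj φ ψ ihφ ihψ =>
      intro w w' hle
      constructor
      · rintro ⟨h1, h2⟩; exact ⟨(ihφ w w' hle).1 h1, (ihψ w w' hle).1 h2⟩
      · rintro (h | h)
        · exact Or.inl ((ihφ w w' hle).2 h)
        · exact Or.inr ((ihψ w w' hle).2 h)
  | disj φ ψ ihφ ihψ =>
      intro w w' hle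
      constructor
      · rintro (h | h)
        · exact Or.inl ((ihφ w w' hle).1 h)
        · exact Or.inr ((ihψ w w' hle).1 h)
      · rintro ⟨h1, h2⟩; exact ⟨(ihφ w w' hle).2 h1, (ihψ w w' hle).2 h2⟩
  | impl φ ψ ihφ ihψ =>
      intro w w' hle
      constructor
      · intro h w'' hle'; exact h w'' (I.trans hle hle')
      · rintro ⟨h1, h2⟩; exact ⟨(ihφ w w' hle).1 h1, (ihψ w w' hle).2 h2⟩
  | dneg φ ih =>
      intro w w' hle
      constructor
      · rintro (h | h)
        · exact Or.inl fun w'' hle' => h w'' (I.trans hle hle')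
        · exact absurd h (consistent_not_both I hI φ w)
      · rintro ⟨h1, _⟩
        have hp := (ih w w' hle).1 h1
        exact ⟨hp, fun hm => consistent_not_both I hI φ w' ⟨hp, hm⟩⟩

theorem cw_iff_forceP_of_consistent {Atom : Type} (I : NelsonInterp Atom)
    (hI : I.Consistent) (φ : Formula Atom) (w : I.W) :
    cw I w φ ↔ forceP I w φ := by
  constructor
  · intro h; exact h.2
  · intro h
    refine ⟨fun w' hle => ?_, h⟩
    left
    intro hm
    exact consistent_not_both I hI φ w' ⟨(force_mono I hI φ w w' hle).1 h, hm⟩
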